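/- Let R be a ring with 1, δ : R → R a ring endomorphism, and T = [t_{i,j}] a transitive n×n matrix with all entries in the center Z(R). If A ∈ M_n(R, δ, T), then for every k ≥ 1 all coefficients of the k-th right characteristic polynomial p_{A,k}(z) = rdet_(k)(z I_n − A) and of the k-th left characteristic polynomial q_{A,k}(z) = ldet_(k)(z I_n − A), computed in the polynomial ring R[z] over a central commuting indeterminate z, lie in the fixed subring Fix(δ). -/

import Mathlib

/-- A matrix `T` over a ring `R` is transitive if `T i i = 1` and
`T i j * T j k = T i k` for all `i, j, k`. -/
def IsTransitive {n : ℕ} {R : Type*} [Ring R] (T : Matrix (Fin n) (Fin n) R) : Prop :=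
  (∀ i, T i i = 1) ∧ ∀ i j k, T i j * T j k = T i k

/-- The preadjoint matrix `A*` of `A`. -/
def preadj {n : ℕ} {R : Type*} [Ring R] (A : Matrix (Fin n) (Fin n) R) :
    Matrix (Fin n) (Fin n) R :=
  Matrix.of fun r s =>
    ∑ τ : Equiv.Perm (Fin n), ∑ π : Equiv.Perm (Fin n),
      if τ s = s ∧ π s = r then
        ((Equiv.Perm.sign π : ℤˣ) : ℤ) •
          (((List.finRange n).filter (fun i => i ≠ s)).map
            (fun i => A (τ i) (π (τ i)))).prod
      else 0

/-- The right adjoint sequence of `A`. -/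
def rightSeq {n : ℕ} {R : Type*} [Ring R] (A : Matrix (Fin n) (Fin n) R) :
    ℕ → Matrix (Fin n) (Fin n) R × Matrix (Fin n) (Fin n) R
  | 0 => (preadj A, A * preadj A)
  | k + 1 => (preadj (rightSeq A k).2, (rightSeq A k).2 * preadj (rightSeq A k).2)

/-- The `k`-th right determinant `rdet_(k)(A) = tr(A P₁ ⋯ P_k)` (for `k ≥ 1`). -/
def rdet {n : ℕ} {R : Type*} [Ring R] (k : ℕ) (A : Matrix (Fin n) (Fin n) R) : R :=
  Matrix.trace (rightSeq A (k - 1)).2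

/-- The left adjoint sequence of `A`. -/
def leftSeq {n : ℕ} {R : Type*} [Ring R] (A : Matrix (Fin n) (Fin n) R) :
    ℕ → Matrix (Fin n) (Fin n) R × Matrix (Fin n) (Fin n) R
  | 0 => (preadj A, preadj A * A)
  | k + 1 => (preadj (leftSeq A k).2, preadj (leftSeq A k).2 * (leftSeq A k).2)

/-- The `k`-th left determinant `ldet_(k)(A) = tr(Q_k ⋯ Q₁ A)` (for `k ≥ 1`). -/
def ldet {n : ℕ} {R : Type*} [Ring R] (k : ℕ) (A : Matrix (Fin n) (Fin n) R) : R :=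
  Matrix.trace (leftSeq A (k - 1)).2

/-- The matrix `z Iₙ - A` over the polynomial ring `R[z]`. -/
noncomputable def zIsub {n : ℕ} {R : Type*} [Ring R] (A : Matrix (Fin n) (Fin n) R) :
    Matrix (Fin n) (Fin n) (Polynomial R) :=
  Matrix.of fun i j => (if i = j then Polynomial.X else 0) - Polynomial.C (A i j)

section Helpers

variable {S : Type*} [Ring S]

/-- Pull central left factors out of a list product. -/
lemma central_list_prod {ι : Type*} (l : List ι) (c a : ι → S)
    (hc : ∀ i, c i ∈ Subring.center S) :
    (l.map fun i => c i * a i).prod = (l.map c).prod * (l.map a).prod := by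
  induction l with
  | nil => simp
  | cons i l ih =>
    have hcent : (l.map c).prod ∈ Subring.center S :=
      Subring.list_prod_mem _ (by
        intro x hx
        obtain ⟨j, -, rfl⟩ := List.mem_map.1 hx
        exact hc j)
    have hcomm : a i * (l.map c).prod = (l.map c).prod * a i :=
      Subring.mem_center_iff.1 hcent (a i)
    simp only [List.map_cons, List.prod_cons, ih, mul_assoc]
    congr 1
    rw [← mul_assoc, hcomm, mul_assoc]

/-- Telescoping product over a permutation for transitive systems (in a
commutative monoid). -/
lemma perm_prod_eq_one {n : ℕ} {M : Type*} [CommMonoid M] (t : Fin n → Fin n → M)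
    (h1 : ∀ i, t i i = 1) (h2 : ∀ i j k, t i j * t j k = t i k) :
    ∀ (N : ℕ) (π : Equiv.Perm (Fin n)), π.support.card ≤ N →
      ∏ j, t j (π j) = 1 := by
  intro N
  induction N with
  | zero =>
    intro π hπ
    have : π = 1 := by
      rwa [Nat.le_zero, Finset.card_eq_zero, Equiv.Perm.support_eq_empty_iff] at hπ
    subst this
    simp [h1]
  | succ N ih =>
    intro π hπ
    by_cases hπ1 : π = 1
    · subst hπ1; simp [h1]
    · obtain ⟨a, ha⟩ : ∃ a, π a ≠ a := by
        by_contra h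
        push_neg at h
        exact hπ1 (Equiv.ext h)
      set b := π a with hb
      have hba : b ≠ a := ha
      set σ := Equiv.swap a b * π with hσ
      have hσa : σ a = a := by
        simp [hσ, ← hb, Equiv.swap_apply_right]
      have hsub : σ.support ⊆ π.support.erase a := by
        intro x hx
        rw [Equiv.Perm.mem_support] at hx
        rw [Finset.mem_erase, Equiv.Perm.mem_support]
        constructor
        · rintro rfl; exact hx hσa
        · intro hfix
          apply hx
          have hxa : x ≠ a := by rintro rfl; exact ha hfix
          have hxb : x ≠ b := by
            rintro rfl
            exact hba (π.injective (hfix.trans hb))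
          simp [hσ, hfix, Equiv.swap_apply_of_ne_of_ne hxa hxb]
      have hcard : σ.support.card ≤ N := by
        have h1' : (π.support.erase a).card < π.support.card :=
          Finset.card_erase_lt_of_mem (Equiv.Perm.mem_support.2 ha)
        have := Finset.card_le_card hsub
        omega
      have hσprod : ∏ j, t j (σ j) = 1 := ih σ hcard
      set c := π⁻¹ a with hc
      have hπc : π c = a := π.apply_symm_apply a
      have hca : c ≠ a := by
        intro h
        have h2c := hπc
        rw [h] at h2c
        exact ha (hb.trans h2c)
      have hmem : c ∈ Finset.univ.erase a := Finset.mem_erase.2 ⟨hca, Finset.mem_univ c⟩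
      have hsplit2 : ∀ ρ : Equiv.Perm (Fin n),
          ∏ j, t j (ρ j) =
            t a (ρ a) * (t c (ρ c) * ∏ j ∈ (Finset.univ.erase a).erase c, t j (ρ j)) := by
        intro ρ
        rw [← Finset.mul_prod_erase Finset.univ _ (Finset.mem_univ a),
          ← Finset.mul_prod_erase _ _ hmem]
      have hrest : ∀ x ∈ (Finset.univ.erase a).erase c, t x (σ x) = t x (π x) := by
        intro x hx
        congr 1
        obtain ⟨hxc, hxa, -⟩ := by
          rw [Finset.mem_erase, Finset.mem_erase] at hx; exact hx
        have h1x : π x ≠ a := fun h => hxc (π.injective (h.trans hπc.symm))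
        have h2x : π x ≠ b := fun h => hxa (π.injective (h.trans hb))
        simp [hσ, Equiv.swap_apply_of_ne_of_ne h1x h2x]
      have hσc : σ c = b := by simp [hσ, hπc, Equiv.swap_apply_left]
      calc ∏ j, t j (π j)
          = t a b * (t c a * ∏ j ∈ (Finset.univ.erase a).erase c, t j (π j)) := by
            rw [hsplit2 π, ← hb, hπc]
        _ = t a a * (t c b * ∏ j ∈ (Finset.univ.erase a).erase c, t j (σ j)) := by
            rw [Finset.prod_congr rfl hrest, h1 a, one_mul, ← mul_assoc,
              mul_comm (t a b) (t c a), h2 c a b]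
        _ = ∏ j, t j (σ j) := by rw [hsplit2 σ, hσa, hσc]
        _ = 1 := hσprod

variable {n : ℕ}

/-- The key scalar identity: the product of the `T`-entries appearing in a term of
the preadjoint equals `T r s`. -/
lemma T_list_prod (T : Matrix (Fin n) (Fin n) S)
    (hZ : ∀ i j, T i j ∈ Subring.center S) (hT : IsTransitive T)
    (s r : Fin n) (τ π : Equiv.Perm (Fin n))
    (hτ : τ s = s) (hπ : π s = r) :
    ((((List.finRange n).filter (fun i => i ≠ s)).map
      (fun i => T (τ i) (π (τ i)))).prod) = T r s := by
  classical
  set t' : Fin n → Fin n → Subring.center S := fun i j => ⟨T i j, hZ i j⟩ with ht'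
  have h1' : ∀ i, t' i i = 1 := fun i => Subtype.ext (hT.1 i)
  have h2' : ∀ i j k, t' i j * t' j k = t' i k := fun i j k => Subtype.ext (hT.2 i j k)
  set l : List (Fin n) := (List.finRange n).filter (fun i => i ≠ s) with hl
  have hnd : l.Nodup := (List.nodup_finRange n).filter _
  have hto : l.toFinset = Finset.univ.erase s := by
    ext x
    simp [hl, List.mem_filter, Finset.mem_erase, List.mem_finRange]
  -- lift the product to the center
  have hcoe : (l.map fun i => T (τ i) (π (τ i))).prod
      = (((l.map fun i => t' (τ i) (π (τ i))).prod : Subring.center S) : S) := by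
    rw [SubmonoidClass.coe_list_prod, List.map_map]
    rfl
  have himg : (Finset.univ.erase s).image τ = Finset.univ.erase s := by
    ext x
    simp only [Finset.mem_image, Finset.mem_erase, Finset.mem_univ, and_true]
    constructor
    · rintro ⟨i, hi, rfl⟩
      exact fun h => hi (τ.injective (h.trans hτ.symm))
    · intro hx
      refine ⟨τ⁻¹ x, fun h => hx ?_, τ.apply_symm_apply x⟩
      rw [← hτ, ← h, Equiv.Perm.inv_def, τ.apply_symm_apply]
  have hreindex : ∏ i ∈ Finset.univ.erase s, t' (τ i) (π (τ i))
      = ∏ j ∈ Finset.univ.erase s, t' j (π j) := by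
    have h0 : ∏ j ∈ (Finset.univ.erase s).image (⇑τ), t' j (π j)
        = ∏ i ∈ Finset.univ.erase s, t' (τ i) (π (τ i)) :=
      Finset.prod_image (fun i _ j _ h => τ.injective h)
    rw [← h0, himg]
  have hfull : ∏ j, t' j (π j) = 1 :=
    perm_prod_eq_one t' h1' h2' π.support.card π le_rfl
  have hsplit : t' s r * ∏ j ∈ Finset.univ.erase s, t' j (π j) = 1 := by
    have h0 : t' s (π s) * ∏ x ∈ Finset.univ.erase s, t' x (π x) = ∏ x, t' x (π x) :=
      Finset.mul_prod_erase Finset.univ (fun j => t' j (π j)) (Finset.mem_univ s)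
    rw [hπ] at h0
    exact h0.trans hfull
  have hP : ∏ j ∈ Finset.univ.erase s, t' j (π j) = t' r s := by
    have := congrArg (fun x => t' r s * x) hsplit
    simp only [mul_one] at this
    rw [← mul_assoc, h2' r s r, h1' r, one_mul] at this
    exact this
  have : (l.map fun i => t' (τ i) (π (τ i))).prod = t' r s := by
    rw [← List.prod_toFinset _ hnd, hto, hreindex, hP]
  rw [hcoe, this]

/-- The preadjoint of a supermatrix is a supermatrix. -/
lemma super_preadj (δ : S →+* S) (T : Matrix (Fin n) (Fin n) S)
    (hZ : ∀ i j, T i j ∈ Subring.center S) (hT : IsTransitive T)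
    (B : Matrix (Fin n) (Fin n) S)
    (hB : ∀ i j, δ (B i j) = T i j * B i j) :
    ∀ r s, δ (preadj B r s) = T r s * preadj B r s := by
  intro r s
  simp only [preadj, Matrix.of_apply, map_sum, Finset.mul_sum]
  refine Finset.sum_congr rfl fun τ _ => Finset.sum_congr rfl fun π _ => ?_
  split_ifs with h
  · rw [map_zsmul, mul_smul_comm]
    congr 1
    rw [map_list_prod δ, List.map_map]
    have hfun : (δ ∘ fun i => B (τ i) (π (τ i)))
        = fun i => T (τ i) (π (τ i)) * B (τ i) (π (τ i)) := by
      funext i; exact hB _ _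
    rw [hfun, central_list_prod _ _ _ (fun i => hZ _ _),
      T_list_prod T hZ hT s r τ π h.1 h.2]
  · rw [map_zero, mul_zero]

/-- The product of supermatrices is a supermatrix. -/
lemma super_mul (δ : S →+* S) (T : Matrix (Fin n) (Fin n) S)
    (hZ : ∀ i j, T i j ∈ Subring.center S) (hT : IsTransitive T)
    (B C : Matrix (Fin n) (Fin n) S)
    (hB : ∀ i j, δ (B i j) = T i j * B i j)
    (hC : ∀ i j, δ (C i j) = T i j * C i j) :
    ∀ i j, δ ((B * C) i j) = T i j * (B * C) i j := by
  intro i j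
  rw [Matrix.mul_apply, map_sum, Finset.mul_sum]
  refine Finset.sum_congr rfl fun k _ => ?_
  rw [map_mul, hB, hC]
  have hcomm : B i k * T k j = T k j * B i k :=
    Subring.mem_center_iff.1 (hZ k j) (B i k)
  calc T i k * B i k * (T k j * C k j)
      = T i k * ((B i k * T k j) * C k j) := by rw [mul_assoc, mul_assoc]
    _ = T i k * ((T k j * B i k) * C k j) := by rw [hcomm]
    _ = T i k * T k j * (B i k * C k j) := by rw [mul_assoc, mul_assoc]
    _ = T i j * (B i k * C k j) := by rw [hT.2 i k j]

lemma super_rightSeq (δ : S →+* S) (T : Matrix (Fin n) (Fin n) S)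
    (hZ : ∀ i j, T i j ∈ Subring.center S) (hT : IsTransitive T)
    (B : Matrix (Fin n) (Fin n) S)
    (hB : ∀ i j, δ (B i j) = T i j * B i j) (k : ℕ) :
    ∀ i j, δ ((rightSeq B k).2 i j) = T i j * (rightSeq B k).2 i j := by
  induction k with
  | zero => exact super_mul δ T hZ hT B (preadj B) hB (super_preadj δ T hZ hT B hB)
  | succ k ih =>
    exact super_mul δ T hZ hT _ _ ih (super_preadj δ T hZ hT _ ih)

lemma super_leftSeq (δ : S →+* S) (T : Matrix (Fin n) (Fin n) S)
    (hZ : ∀ i j, T i j ∈ Subring.center S) (hT : IsTransitive T)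
    (B : Matrix (Fin n) (Fin n) S)
    (hB : ∀ i j, δ (B i j) = T i j * B i j) (k : ℕ) :
    ∀ i j, δ ((leftSeq B k).2 i j) = T i j * (leftSeq B k).2 i j := by
  induction k with
  | zero => exact super_mul δ T hZ hT (preadj B) B (super_preadj δ T hZ hT B hB) hB
  | succ k ih =>
    exact super_mul δ T hZ hT _ _ (super_preadj δ T hZ hT _ ih) ih

lemma super_trace (δ : S →+* S) (T : Matrix (Fin n) (Fin n) S)
    (hT : IsTransitive T)
    (B : Matrix (Fin n) (Fin n) S)
    (hB : ∀ i j, δ (B i j) = T i j * B i j) :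
    δ (Matrix.trace B) = Matrix.trace B := by
  rw [Matrix.trace, map_sum]
  refine Finset.sum_congr rfl fun i _ => ?_
  rw [Matrix.diag_apply, hB, hT.1 i, one_mul]

end Helpers

lemma C_mem_center {R : Type*} [Ring R] {a : R} (ha : a ∈ Subring.center R) :
    Polynomial.C a ∈ Subring.center (Polynomial R) := by
  rw [Subring.mem_center_iff]
  intro p
  induction p using Polynomial.induction_on' with
  | add p q hp hq => rw [add_mul, mul_add, hp, hq]
  | monomial m b =>
    rw [Polynomial.monomial_mul_C, Polynomial.C_mul_monomial,
      Subring.mem_center_iff.1 ha b]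

/-- If `T` is transitive with central entries and `A ∈ M_n(R, δ, T)`, then all
coefficients of the right characteristic polynomials `p_{A,k}(z) = rdet_(k)(z Iₙ - A)`
and of the left characteristic polynomials `q_{A,k}(z) = ldet_(k)(z Iₙ - A)` lie in
`Fix(δ)`, for every `k ≥ 1`. -/
theorem stmt_17 {n : ℕ} {R : Type*} [Ring R] (δ : R →+* R)
    (T : Matrix (Fin n) (Fin n) R) (hZ : ∀ i j, T i j ∈ Subring.center R)
    (hT : IsTransitive T)
    (A : Matrix (Fin n) (Fin n) R) (hA : ∀ i j, δ (A i j) = T i j * A i j) :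
    ∀ k : ℕ, 1 ≤ k → ∀ m : ℕ,
      δ ((rdet k (zIsub A)).coeff m) = (rdet k (zIsub A)).coeff m ∧
      δ ((ldet k (zIsub A)).coeff m) = (ldet k (zIsub A)).coeff m := by
  intro k hk m
  set δ' : Polynomial R →+* Polynomial R := Polynomial.mapRingHom δ with hδ'
  set T' : Matrix (Fin n) (Fin n) (Polynomial R) :=
    Matrix.of fun i j => Polynomial.C (T i j) with hT'
  have hZ' : ∀ i j, T' i j ∈ Subring.center (Polynomial R) := fun i j =>
    C_mem_center (hZ i j)
  have hTt' : IsTransitive T' := by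
    constructor
    · intro i; simp [hT', hT.1 i]
    · intro i j kk; simp [hT', ← map_mul, hT.2 i j kk]
  have hA' : ∀ i j, δ' (zIsub A i j) = T' i j * zIsub A i j := by
    intro i j
    by_cases h : i = j
    · subst h
      simp [zIsub, hδ', hT', hA, hT.1 i, Polynomial.map_sub]
    · simp [zIsub, hδ', hT', h, hA, Polynomial.map_sub, map_mul]
  have hr : δ' (rdet k (zIsub A)) = rdet k (zIsub A) :=
    super_trace δ' T' hTt' _ (super_rightSeq δ' T' hZ' hTt' _ hA' (k - 1))
  have hl : δ' (ldet k (zIsub A)) = ldet k (zIsub A) :=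
    super_trace δ' T' hTt' _ (super_leftSeq δ' T' hZ' hTt' _ hA' (k - 1))
  constructor
  · have := congrArg (fun p => Polynomial.coeff p m) hr
    simpa [hδ', Polynomial.coeff_map] using this
  · have := congrArg (fun p => Polynomial.coeff p m) hl
    simpa [hδ', Polynomial.coeff_map] using this
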